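/- Let Λ = Z_p⟦X⟧ and T^dec = Λ[y,z]/(y(y−p), z(z−X), (y−p)z, y(z−X)). Then T^dec is isomorphic as a Λ-algebra to the fiber product Λ ×_{F_p} Λ (pairs (a,b) ∈ Λ × Λ with a ≡ b mod the maximal ideal), via y ↦ (p,0) and z ↦ (X,0). Consequently, the kernel J^dec of the second projection T^dec → Λ is isomorphic as a Λ-module to the maximal ideal m_Λ = (p, X) of Λ, and J^dec/(J^dec)² ≅ m_Λ/m_Λ² is a 2-dimensional F_p-vector space, which is pseudo-null but not cyclic as a Λ-module. -/

import Mathlib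

set_option synthInstance.maxHeartbeats 1000000
set_option maxHeartbeats 2000000
open IsLocalRing

/-- The one-variable Iwasawa algebra `Λ = ℤ_p⟦X⟧`. -/
abbrev Lam11 (p : ℕ) [Fact p.Prime] : Type := PowerSeries ℤ_[p]

/-- The ideal `(y(y−p), z(z−X), (y−p)z, y(z−X)) ⊆ Λ[y,z]`. -/
noncomputable def Idec (p : ℕ) [Fact p.Prime] : Ideal (MvPolynomial (Fin 2) (Lam11 p)) :=
  Ideal.span
    {MvPolynomial.X 0 * (MvPolynomial.X 0 - MvPolynomial.C ((p : Lam11 p))),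
     MvPolynomial.X 1 * (MvPolynomial.X 1 - MvPolynomial.C PowerSeries.X),
     (MvPolynomial.X 0 - MvPolynomial.C ((p : Lam11 p))) * MvPolynomial.X 1,
     MvPolynomial.X 0 * (MvPolynomial.X 1 - MvPolynomial.C PowerSeries.X)}

/-- The ring `T^dec = Λ[y,z]/(y(y−p), z(z−X), (y−p)z, y(z−X))`. -/
abbrev Tdec (p : ℕ) [Fact p.Prime] : Type :=
  MvPolynomial (Fin 2) (Lam11 p) ⧸ Idec p

/-- The fiber product `Λ ×_{𝔽_p} Λ`: pairs `(a, b)` with `a ≡ b` modulo the maximal ideal,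
as a `Λ`-subalgebra of `Λ × Λ`. -/
def fiberProd (p : ℕ) [Fact p.Prime] : Subalgebra (Lam11 p) (Lam11 p × Lam11 p) where
  carrier := {a | a.1 - a.2 ∈ maximalIdeal (Lam11 p)}
  mul_mem' := by
    intro a b ha hb
    show a.1 * b.1 - a.2 * b.2 ∈ maximalIdeal (Lam11 p)
    have h : a.1 * b.1 - a.2 * b.2 = a.1 * (b.1 - b.2) + (a.1 - a.2) * b.2 := by ring
    rw [h]
    exact add_mem (Ideal.mul_mem_left _ _ hb) (Ideal.mul_mem_right _ _ ha)
  one_mem' := by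
    show (1 : Lam11 p) - 1 ∈ maximalIdeal (Lam11 p); simp
  add_mem' := by
    intro a b ha hb
    show a.1 + b.1 - (a.2 + b.2) ∈ maximalIdeal (Lam11 p)
    have h : a.1 + b.1 - (a.2 + b.2) = (a.1 - a.2) + (b.1 - b.2) := by ring
    rw [h]
    exact add_mem ha hb
  zero_mem' := by
    show (0 : Lam11 p) - 0 ∈ maximalIdeal (Lam11 p); simp
  algebraMap_mem' := by
    intro r
    show r - r ∈ maximalIdeal (Lam11 p); simp

/-- The second projection `Λ ×_{𝔽_p} Λ → Λ`. -/
noncomputable def proj2 (p : ℕ) [Fact p.Prime] : ↥(fiberProd p) →+* Lam11 p :=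
  (RingHom.snd (Lam11 p) (Lam11 p)).comp (fiberProd p).val.toRingHom

open PowerSeries in
lemma Lam_mem_max_iff (p : ℕ) [Fact p.Prime] (f : Lam11 p) :
    f ∈ maximalIdeal (Lam11 p) ↔ (constantCoeff (R := ℤ_[p])) f ∈ maximalIdeal ℤ_[p] := by
  rw [mem_maximalIdeal, mem_maximalIdeal, mem_nonunits_iff, mem_nonunits_iff,
    PowerSeries.isUnit_iff_constantCoeff]

open PowerSeries in
lemma Lam_max_eq_span (p : ℕ) [Fact p.Prime] :
    maximalIdeal (Lam11 p) = Ideal.span {(p : Lam11 p), PowerSeries.X} := by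
  apply le_antisymm
  · intro f hf
    rw [Lam_mem_max_iff, PadicInt.maximalIdeal_eq_span_p, Ideal.mem_span_singleton] at hf
    obtain ⟨u, hu⟩ := hf
    have hX : (X : (Lam11 p)) ∣ (f - C (R := ℤ_[p]) ((constantCoeff (R := ℤ_[p])) f)) := by
      rw [X_dvd_iff]; simp
    obtain ⟨g, hg⟩ := hX
    have : f = (p : Lam11 p) * C (R := ℤ_[p]) u + X * g := by
      rw [← hg, hu]
      have : ((p:ℕ) : Lam11 p) = C (R := ℤ_[p]) (p : ℤ_[p]) := by
        simp [map_natCast]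
      rw [this, ← map_mul]
      ring
    rw [this]
    exact add_mem (Ideal.mul_mem_right _ _ (Ideal.subset_span (by simp)))
      (Ideal.mul_mem_right _ _ (Ideal.subset_span (by simp)))
  · rw [Ideal.span_le]
    rintro x (rfl | rfl)
    · rw [SetLike.mem_coe, Lam_mem_max_iff, PadicInt.maximalIdeal_eq_span_p,
        Ideal.mem_span_singleton]
      simp [map_natCast]
    · rw [SetLike.mem_coe, Lam_mem_max_iff]
      simp
namespace Stmt11
variable (p : ℕ) [Fact p.Prime]

noncomputable def pel : ↥(fiberProd p) :=
  ⟨((p : Lam11 p), 0), by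
    show (p : Lam11 p) - 0 ∈ maximalIdeal (Lam11 p)
    rw [sub_zero, Lam_max_eq_span]
    exact Ideal.subset_span (by simp)⟩

noncomputable def xel : ↥(fiberProd p) :=
  ⟨(PowerSeries.X, 0), by
    show (PowerSeries.X : Lam11 p) - 0 ∈ maximalIdeal (Lam11 p)
    rw [sub_zero, Lam_max_eq_span]
    exact Ideal.subset_span (by simp)⟩

@[simp] lemma pel_coe : ((pel p : ↥(fiberProd p)) : Lam11 p × Lam11 p) = ((p : Lam11 p), 0) := rfl
@[simp] lemma xel_coe : ((xel p : ↥(fiberProd p)) : Lam11 p × Lam11 p) = (PowerSeries.X, 0) := rfl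

noncomputable def phi : MvPolynomial (Fin 2) (Lam11 p) →ₐ[Lam11 p] ↥(fiberProd p) :=
  MvPolynomial.aeval ![pel p, xel p]

@[simp] lemma phi_X0 : phi p (MvPolynomial.X 0) = pel p := by
  simp [phi]

@[simp] lemma phi_X1 : phi p (MvPolynomial.X 1) = xel p := by
  simp [phi]

@[simp] lemma phi_C (c : Lam11 p) :
    ((phi p (MvPolynomial.C c) : ↥(fiberProd p)) : Lam11 p × Lam11 p) = (c, c) := by
  simp [phi, MvPolynomial.aeval_C]

lemma Idec_le_ker : Idec p ≤ RingHom.ker (phi p) := by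
  rw [Idec, Ideal.span_le]
  rintro x (rfl | rfl | rfl | rfl) <;>
  · rw [SetLike.mem_coe, RingHom.mem_ker]
    apply Subtype.ext
    apply Prod.ext <;>
      simp [map_mul, map_sub, Prod.fst_mul, Prod.snd_mul, Prod.fst_sub, Prod.snd_sub]

end Stmt11
namespace Stmt11
variable (p : ℕ) [Fact p.Prime]

open MvPolynomial

lemma g1_mem : X 0 * (X 0 - C ((p : Lam11 p))) ∈ Idec p :=
  Ideal.subset_span (by simp)
lemma g2_mem : X 1 * (X 1 - C (PowerSeries.X : Lam11 p)) ∈ Idec p :=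
  Ideal.subset_span (by simp)
lemma g3_mem : (X 0 - C ((p : Lam11 p))) * X 1 ∈ Idec p :=
  Ideal.subset_span (by simp)
lemma g4_mem : X 0 * (X 1 - C (PowerSeries.X : Lam11 p)) ∈ Idec p :=
  Ideal.subset_span (by simp)

lemma normal_form (q : MvPolynomial (Fin 2) (Lam11 p)) :
    ∃ a u v : Lam11 p, q - (C a + C u * X 0 + C v * X 1) ∈ Idec p := by
  induction q using MvPolynomial.induction_on with
  | C a => exact ⟨a, 0, 0, by simp⟩
  | add q r hq hr =>
      obtain ⟨a1, u1, v1, h1⟩ := hq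
      obtain ⟨a2, u2, v2, h2⟩ := hr
      refine ⟨a1 + a2, u1 + u2, v1 + v2, ?_⟩
      have : q + r - (C (a1 + a2) + C (u1 + u2) * X 0 + C (v1 + v2) * X 1)
          = (q - (C a1 + C u1 * X 0 + C v1 * X 1)) + (r - (C a2 + C u2 * X 0 + C v2 * X 1)) := by
        rw [map_add, map_add, map_add]; ring
      rw [this]; exact add_mem h1 h2
  | mul_X q i hq =>
      obtain ⟨a, u, v, h⟩ := hq
      fin_cases i <;> simp only [Fin.zero_eta, Fin.mk_one, Fin.isValue]
      · refine ⟨0, a + u * (p : Lam11 p), v * (p : Lam11 p), ?_⟩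
        have : q * X 0 - (C 0 + C (a + u * (p : Lam11 p)) * X 0 + C (v * (p : Lam11 p)) * X 1)
            = (q - (C a + C u * X 0 + C v * X 1)) * X 0
              + (C u * (X 0 * (X 0 - C ((p : Lam11 p))))
                + C v * ((X 0 - C ((p : Lam11 p))) * X 1)) := by
          rw [map_zero, map_add, map_mul, map_mul]; ring
        rw [this]
        exact add_mem (Ideal.mul_mem_right _ _ h)
          (add_mem (Ideal.mul_mem_left _ _ (g1_mem p)) (Ideal.mul_mem_left _ _ (g3_mem p)))
      · refine ⟨0, u * PowerSeries.X, a + v * PowerSeries.X, ?_⟩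
        have : q * X 1 - (C 0 + C (u * PowerSeries.X) * X 0 + C (a + v * PowerSeries.X) * X 1)
            = (q - (C a + C u * X 0 + C v * X 1)) * X 1
              + (C u * (X 0 * (X 1 - C (PowerSeries.X : Lam11 p)))
                + C v * (X 1 * (X 1 - C (PowerSeries.X : Lam11 p)))) := by
          rw [map_zero, map_add, map_mul, map_mul]; ring
        rw [this]
        exact add_mem (Ideal.mul_mem_right _ _ h)
          (add_mem (Ideal.mul_mem_left _ _ (g4_mem p)) (Ideal.mul_mem_left _ _ (g2_mem p)))

end Stmt11
namespace Stmt11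
variable (p : ℕ) [Fact p.Prime]

open MvPolynomial

lemma phi_surjective : Function.Surjective (phi p) := by
  rintro ⟨⟨a, b⟩, hab⟩
  have hab' : a - b ∈ Ideal.span {(p : Lam11 p), PowerSeries.X} := by
    rwa [← Lam_max_eq_span]
  rw [Ideal.mem_span_pair] at hab'
  obtain ⟨u, v, huv⟩ := hab'
  refine ⟨C b + C u * X 0 + C v * X 1, ?_⟩
  apply Subtype.ext
  apply Prod.ext <;>
    simp [map_add, map_mul, Prod.fst_add, Prod.snd_add, Prod.fst_mul, Prod.snd_mul]
  linear_combination huv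

lemma ker_le_Idec : RingHom.ker (phi p) ≤ Idec p := by
  intro q hq
  rw [RingHom.mem_ker] at hq
  obtain ⟨a, u, v, hnf⟩ := normal_form p q
  have hnf0 : phi p (C a + C u * X 0 + C v * X 1) = 0 := by
    have := Idec_le_ker p hnf
    rw [RingHom.mem_ker, map_sub, hq, zero_sub, neg_eq_zero] at this
    exact this
  have hco : ((phi p (C a + C u * X 0 + C v * X 1) : ↥(fiberProd p)) : Lam11 p × Lam11 p)
      = (a + u * (p : Lam11 p) + v * PowerSeries.X, a) := by
    apply Prod.ext <;>
      simp [map_add, map_mul, Prod.fst_add, Prod.snd_add, Prod.fst_mul, Prod.snd_mul]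
  rw [hnf0] at hco
  have ha : a = 0 := by
    have := congrArg Prod.snd hco
    simpa using this.symm
  have huv : u * (p : Lam11 p) + v * PowerSeries.X = 0 := by
    have := congrArg Prod.fst hco
    simp [ha] at this
    linear_combination -this
  -- from u*p + v*X = 0, deduce u = X*w, v = -(w*p)
  have hu0 : PowerSeries.constantCoeff (R := ℤ_[p]) u = 0 := by
    have := congrArg (PowerSeries.constantCoeff (R := ℤ_[p])) huv
    simp [map_add, map_mul] at this
    rcases this with h | h
    · exact h
    · exact absurd h (Fact.out : p.Prime).ne_zero
  obtain ⟨w, hw⟩ := PowerSeries.X_dvd_iff.mpr hu0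
  have hv : v = -(w * (p : Lam11 p)) := by
    have hX : (PowerSeries.X : Lam11 p) * (w * (p : Lam11 p) + v) = 0 := by
      rw [hw] at huv; linear_combination huv
    rcases mul_eq_zero.mp hX with h | h
    · exact absurd h PowerSeries.X_ne_zero
    · linear_combination h
  subst ha
  have hnfI : (C (0:Lam11 p) + C u * X 0 + C v * X 1 : MvPolynomial (Fin 2) (Lam11 p))
      ∈ Idec p := by
    have hid : (C (0:Lam11 p) + C u * X 0 + C v * X 1 : MvPolynomial (Fin 2) (Lam11 p))
        = C w * ((X 0 - C ((p : Lam11 p))) * X 1 - X 0 * (X 1 - C PowerSeries.X)) := by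
      rw [hw, hv, map_zero, map_mul, map_neg, map_mul]
      ring
    rw [hid]
    exact Ideal.mul_mem_left _ _ (sub_mem (g3_mem p) (g4_mem p))
  have hq' : q = (q - (C (0:Lam11 p) + C u * X 0 + C v * X 1))
      + (C (0:Lam11 p) + C u * X 0 + C v * X 1) := by ring
  rw [hq']
  exact add_mem hnf hnfI

end Stmt11
namespace Stmt11
variable (p : ℕ) [Fact p.Prime]

open MvPolynomial

noncomputable def psi : Tdec p →ₐ[Lam11 p] ↥(fiberProd p) :=
  Ideal.Quotient.liftₐ (Idec p) (phi p)
    (fun a ha => RingHom.mem_ker.mp (Idec_le_ker p ha))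

@[simp] lemma psi_mk (q : MvPolynomial (Fin 2) (Lam11 p)) :
    psi p (Ideal.Quotient.mk (Idec p) q) = phi p q := by
  simp [psi, Ideal.Quotient.liftₐ_apply, Ideal.Quotient.lift_mk]
  rfl

lemma psi_bijective : Function.Bijective (psi p) := by
  constructor
  · intro x y hxy
    obtain ⟨q1, rfl⟩ := Ideal.Quotient.mk_surjective x
    obtain ⟨q2, rfl⟩ := Ideal.Quotient.mk_surjective y
    rw [psi_mk, psi_mk] at hxy
    rw [Ideal.Quotient.mk_eq_mk_iff_sub_mem]
    apply ker_le_Idec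
    rw [RingHom.mem_ker, map_sub, hxy, sub_self]
  · intro s
    obtain ⟨q, hq⟩ := phi_surjective p s
    exact ⟨Ideal.Quotient.mk _ q, by rw [psi_mk, hq]⟩

noncomputable def edec : Tdec p ≃ₐ[Lam11 p] ↥(fiberProd p) :=
  AlgEquiv.ofBijective (psi p) (psi_bijective p)

lemma edec_X0 :
    ((edec p (Ideal.Quotient.mk (Idec p) (X 0)) : ↥(fiberProd p)) : Lam11 p × Lam11 p)
      = ((p : Lam11 p), 0) := by
  show ((psi p (Ideal.Quotient.mk (Idec p) (X 0)) : ↥(fiberProd p)) : Lam11 p × Lam11 p) = _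
  rw [psi_mk, phi_X0, pel_coe]

lemma edec_X1 :
    ((edec p (Ideal.Quotient.mk (Idec p) (X 1)) : ↥(fiberProd p)) : Lam11 p × Lam11 p)
      = (PowerSeries.X, 0) := by
  show ((psi p (Ideal.Quotient.mk (Idec p) (X 1)) : ↥(fiberProd p)) : Lam11 p × Lam11 p) = _
  rw [psi_mk, phi_X1, xel_coe]

end Stmt11
namespace Stmt11
variable (p : ℕ) [Fact p.Prime]

lemma mem_ker_proj2 (x : ↥(fiberProd p)) :
    x ∈ RingHom.ker (proj2 p) ↔ (x : Lam11 p × Lam11 p).2 = 0 := by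
  rw [RingHom.mem_ker]
  rfl

lemma fst_mem_max_of_ker {x : ↥(fiberProd p)} (hx : x ∈ RingHom.ker (proj2 p)) :
    (x : Lam11 p × Lam11 p).1 ∈ maximalIdeal (Lam11 p) := by
  have h1 : (x : Lam11 p × Lam11 p).1 - (x : Lam11 p × Lam11 p).2 ∈ maximalIdeal (Lam11 p) := x.2
  rw [(mem_ker_proj2 p x).mp hx, sub_zero] at h1
  exact h1

lemma pair_mem_fiberProd {a : Lam11 p} (ha : a ∈ maximalIdeal (Lam11 p)) :
    ((a, 0) : Lam11 p × Lam11 p) ∈ fiberProd p := by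
  show a - 0 ∈ maximalIdeal (Lam11 p)
  rwa [sub_zero]

lemma pair_mem_ker {a : Lam11 p} (ha : a ∈ maximalIdeal (Lam11 p)) :
    (⟨(a, 0), pair_mem_fiberProd p ha⟩ : ↥(fiberProd p)) ∈ RingHom.ker (proj2 p) := by
  rw [mem_ker_proj2]

noncomputable def kerEquiv :
    ↥((RingHom.ker (proj2 p)).restrictScalars (Lam11 p)) ≃ₗ[Lam11 p]
      ↥(maximalIdeal (Lam11 p)) where
  toFun x := ⟨((x : ↥(fiberProd p)) : Lam11 p × Lam11 p).1, fst_mem_max_of_ker p x.2⟩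
  map_add' x y := by apply Subtype.ext; simp
  map_smul' r x := by apply Subtype.ext; simp
  invFun a := ⟨⟨(a, 0), pair_mem_fiberProd p a.2⟩, pair_mem_ker p a.2⟩
  left_inv x := by
    apply Subtype.ext; apply Subtype.ext; apply Prod.ext
    · rfl
    · exact ((mem_ker_proj2 p _).mp x.2).symm
  right_inv a := rfl

end Stmt11
namespace Stmt11
variable (p : ℕ) [Fact p.Prime]

noncomputable def proj1 : ↥(fiberProd p) →+* Lam11 p :=
  (RingHom.fst (Lam11 p) (Lam11 p)).comp (fiberProd p).val.toRingHom

noncomputable def proj1a : @AlgHom ℤ ↥(fiberProd p) (Lam11 p) _ _ _ _ (Ring.toIntAlgebra _) :=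
  letI := Ring.toIntAlgebra (Lam11 p)
  { proj1 p with
    commutes' := fun n => by
      show proj1 p (algebraMap ℤ _ n) = algebraMap ℤ _ n
      rw [eq_intCast (algebraMap ℤ (↥(fiberProd p))), eq_intCast (algebraMap ℤ (Lam11 p)), map_intCast] }

@[simp] lemma proj1a_apply (x : ↥(fiberProd p)) :
    proj1a p x = ((x : Lam11 p × Lam11 p)).1 := rfl

lemma ker_le_comap :
    RingHom.ker (proj2 p) ≤
      (maximalIdeal (Lam11 p)).comap (proj1a p) :=
  fun _ hx => fst_mem_max_of_ker p hx

lemma pair_mem_ker_sq {c : Lam11 p} (hc : c ∈ maximalIdeal (Lam11 p) ^ 2) :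
    ∃ (h : ((c, 0) : Lam11 p × Lam11 p) ∈ fiberProd p),
      (⟨(c, 0), h⟩ : ↥(fiberProd p)) ∈ (RingHom.ker (proj2 p)) ^ 2 := by
  rw [pow_two] at hc
  refine Submodule.mul_induction_on hc ?_ ?_
  · intro a ha b hb
    refine ⟨pair_mem_fiberProd p (Ideal.mul_mem_right _ _ ha), ?_⟩
    have : (⟨(a * b, 0), pair_mem_fiberProd p (Ideal.mul_mem_right _ _ ha)⟩ : ↥(fiberProd p))
        = (⟨(a, 0), pair_mem_fiberProd p ha⟩ : ↥(fiberProd p))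
          * ⟨(b, 0), pair_mem_fiberProd p hb⟩ := by
      apply Subtype.ext
      apply Prod.ext <;> simp
    rw [this, pow_two]
    exact Ideal.mul_mem_mul (pair_mem_ker p ha) (pair_mem_ker p hb)
  · rintro x y ⟨hx, hx2⟩ ⟨hy, hy2⟩
    have hxy : ((x + y, 0) : Lam11 p × Lam11 p) ∈ fiberProd p := by
      have := add_mem hx hy
      simpa using this
    refine ⟨hxy, ?_⟩
    have : (⟨(x + y, 0), hxy⟩ : ↥(fiberProd p))
        = (⟨(x, 0), hx⟩ : ↥(fiberProd p)) + ⟨(y, 0), hy⟩ := by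
      apply Subtype.ext
      apply Prod.ext <;> simp
    rw [this]
    exact add_mem hx2 hy2

noncomputable def cotF :
    (RingHom.ker (proj2 p)).Cotangent →ₗ[ℤ] (maximalIdeal (Lam11 p)).Cotangent :=
  @Ideal.mapCotangent ℤ _ _ _ _ _ _ (Ring.toIntAlgebra _) _ _ (proj1a p) (ker_le_comap p)

lemma cotF_bijective : Function.Bijective (cotF p) := by
  constructor
  · rw [injective_iff_map_eq_zero]
    intro x hx
    obtain ⟨y, rfl⟩ := Ideal.toCotangent_surjective _ x
    letI := Ring.toIntAlgebra (Lam11 p)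
    rw [cotF, Ideal.mapCotangent_toCotangent, Ideal.toCotangent_eq_zero] at hx
    rw [Ideal.toCotangent_eq_zero]
    obtain ⟨h, h2⟩ := pair_mem_ker_sq p hx
    have hyval : (y : ↥(fiberProd p)) = ⟨(((y : ↥(fiberProd p)) : Lam11 p × Lam11 p).1, 0), h⟩ := by
      apply Subtype.ext
      apply Prod.ext
      · rfl
      · exact (mem_ker_proj2 p _).mp y.2
    rw [hyval]
    exact h2
  · intro z
    obtain ⟨a, rfl⟩ := Ideal.toCotangent_surjective _ z
    refine ⟨Ideal.toCotangent _ ⟨⟨(a, 0), pair_mem_fiberProd p a.2⟩, pair_mem_ker p a.2⟩, ?_⟩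
    letI := Ring.toIntAlgebra (Lam11 p)
    rw [cotF, Ideal.mapCotangent_toCotangent]
    exact congrArg _ (Subtype.ext rfl)

noncomputable def cotEquiv :
    (RingHom.ker (proj2 p)).Cotangent ≃+ (maximalIdeal (Lam11 p)).Cotangent :=
  AddEquiv.ofBijective (cotF p) (cotF_bijective p)

end Stmt11
namespace Stmt11
variable (p : ℕ) [Fact p.Prime]

open PowerSeries

noncomputable def Pel : ↥(maximalIdeal (Lam11 p)) :=
  ⟨(p : Lam11 p), by rw [Lam_max_eq_span]; exact Ideal.subset_span (by simp)⟩
noncomputable def Qel : ↥(maximalIdeal (Lam11 p)) :=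
  ⟨PowerSeries.X, by rw [Lam_max_eq_span]; exact Ideal.subset_span (by simp)⟩

lemma coeffs_of_mem_max_sq {y : Lam11 p} (hy : y ∈ maximalIdeal (Lam11 p) ^ 2) :
    ((p : ℤ_[p]) ^ 2 ∣ coeff 0 y) ∧ ((p : ℤ_[p]) ∣ coeff 1 y) := by
  rw [pow_two] at hy
  refine Submodule.mul_induction_on hy ?_ ?_
  · intro f hf g hg
    rw [Lam_mem_max_iff, PadicInt.maximalIdeal_eq_span_p, Ideal.mem_span_singleton] at hf hg
    constructor
    · rw [coeff_zero_eq_constantCoeff_apply, map_mul, pow_two]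
      exact mul_dvd_mul (by simpa [coeff_zero_eq_constantCoeff_apply] using hf)
        (by simpa [coeff_zero_eq_constantCoeff_apply] using hg)
    · rw [coeff_mul, Finset.Nat.sum_antidiagonal_eq_sum_range_succ_mk,
        Finset.sum_range_succ, Finset.sum_range_succ, Finset.sum_range_zero]
      simp only [zero_add, Nat.sub_zero, Nat.sub_self]
      apply dvd_add
      · exact Dvd.dvd.mul_right (by simpa [coeff_zero_eq_constantCoeff_apply] using hf) _
      · exact Dvd.dvd.mul_left (by simpa [coeff_zero_eq_constantCoeff_apply] using hg) _
  · intro x y hx hy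
    simp only [map_add]
    exact ⟨dvd_add hx.1 hy.1, dvd_add hx.2 hy.2⟩

lemma mem_max_of_comb_mem_sq {a b : Lam11 p}
    (h : a * (p : Lam11 p) + b * PowerSeries.X ∈ maximalIdeal (Lam11 p) ^ 2) :
    a ∈ maximalIdeal (Lam11 p) ∧ b ∈ maximalIdeal (Lam11 p) := by
  obtain ⟨h0, h1⟩ := coeffs_of_mem_max_sq p h
  have hpC : (p : Lam11 p) = C (R := ℤ_[p]) (p : ℤ_[p]) := by simp [map_natCast]
  rw [hpC] at h0 h1
  rw [map_add, coeff_mul_C, coeff_zero_mul_X, add_zero] at h0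
  rw [map_add, coeff_mul_C] at h1
  rw [show (1 : ℕ) = 0 + 1 from rfl, coeff_succ_mul_X] at h1
  have hp0 : (p : ℤ_[p]) ≠ 0 := by
    exact_mod_cast Nat.cast_ne_zero.mpr (Fact.out : p.Prime).ne_zero
  constructor
  · rw [Lam_mem_max_iff, PadicInt.maximalIdeal_eq_span_p, Ideal.mem_span_singleton,
      ← coeff_zero_eq_constantCoeff_apply]
    obtain ⟨t, ht⟩ := h0
    refine ⟨t, ?_⟩
    have : coeff 0 a * (p : ℤ_[p]) = (p : ℤ_[p]) * t * (p : ℤ_[p]) := by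
      rw [ht]; ring
    exact mul_right_cancel₀ hp0 this
  · rw [Lam_mem_max_iff, PadicInt.maximalIdeal_eq_span_p, Ideal.mem_span_singleton,
      ← coeff_zero_eq_constantCoeff_apply]
    have : (p : ℤ_[p]) ∣ coeff 1 a * (p : ℤ_[p]) := Dvd.intro_left _ rfl
    exact (dvd_add_right this).mp h1

noncomputable def v0 : CotangentSpace (Lam11 p) := (maximalIdeal (Lam11 p)).toCotangent (Pel p)
noncomputable def v1 : CotangentSpace (Lam11 p) := (maximalIdeal (Lam11 p)).toCotangent (Qel p)

lemma comb_eq (a b : Lam11 p) :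
    a • v0 p + b • v1 p
      = (maximalIdeal (Lam11 p)).toCotangent
          ⟨a * (p : Lam11 p) + b * PowerSeries.X,
            add_mem (Ideal.mul_mem_left _ _ (Pel p).2) (Ideal.mul_mem_left _ _ (Qel p).2)⟩ := by
  rw [v0, v1, ← map_smul, ← map_smul, ← map_add]
  congr 1

lemma res_smul (a : Lam11 p) (v : CotangentSpace (Lam11 p)) :
    (residue (Lam11 p) a) • v = a • v :=
  algebraMap_smul (ResidueField (Lam11 p)) a v

lemma cot_indep : LinearIndependent (ResidueField (Lam11 p)) ![v0 p, v1 p] := by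
  rw [LinearIndependent.pair_iff]
  intro s t hst
  obtain ⟨a, rfl⟩ := Ideal.Quotient.mk_surjective s
  obtain ⟨b, rfl⟩ := Ideal.Quotient.mk_surjective t
  have hres : (residue (Lam11 p) a) • v0 p + (residue (Lam11 p) b) • v1 p = 0 := hst
  rw [res_smul, res_smul, comb_eq] at hres
  rw [Ideal.toCotangent_eq_zero] at hres
  obtain ⟨ha, hb⟩ := mem_max_of_comb_mem_sq p hres
  constructor
  · exact Ideal.Quotient.eq_zero_iff_mem.mpr ha
  · exact Ideal.Quotient.eq_zero_iff_mem.mpr hb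

lemma cot_span : ⊤ ≤ Submodule.span (ResidueField (Lam11 p)) (Set.range ![v0 p, v1 p]) := by
  intro z _
  have hr : Set.range ![v0 p, v1 p] = {v0 p, v1 p} := by
    ext x
    simp [Fin.exists_fin_two, or_comm]
  rw [hr]
  obtain ⟨y, rfl⟩ := Ideal.toCotangent_surjective _ z
  have hy : (y : Lam11 p) ∈ Ideal.span {(p : Lam11 p), PowerSeries.X} := by
    rw [← Lam_max_eq_span]; exact y.2
  rw [Ideal.mem_span_pair] at hy
  obtain ⟨a, b, hab⟩ := hy
  rw [Submodule.mem_span_pair]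
  refine ⟨residue (Lam11 p) a, residue (Lam11 p) b, ?_⟩
  rw [res_smul, res_smul, comb_eq]
  congr 1
  exact Subtype.ext hab

noncomputable def cotBasis :
    Module.Basis (Fin 2) (ResidueField (Lam11 p)) (CotangentSpace (Lam11 p)) :=
  Module.Basis.mk (cot_indep p) (cot_span p)

lemma finrank_cot : Module.finrank (ResidueField (Lam11 p)) (CotangentSpace (Lam11 p)) = 2 := by
  rw [Module.finrank_eq_card_basis (cotBasis p), Fintype.card_fin]

end Stmt11
namespace Stmt11
variable (p : ℕ) [Fact p.Prime]

open PowerSeries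

noncomputable def rho : ℤ_[p] →+* ResidueField (Lam11 p) :=
  (IsLocalRing.residue (Lam11 p)).comp (PowerSeries.C (R := ℤ_[p]))

lemma rho_surjective : Function.Surjective (rho p) := by
  intro x
  obtain ⟨f, rfl⟩ := Ideal.Quotient.mk_surjective x
  refine ⟨constantCoeff (R := ℤ_[p]) f, ?_⟩
  show Ideal.Quotient.mk _ (C (R := ℤ_[p]) (constantCoeff (R := ℤ_[p]) f)) = _
  rw [Ideal.Quotient.mk_eq_mk_iff_sub_mem, Lam_mem_max_iff]
  simp [PadicInt.maximalIdeal_eq_span_p]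

lemma ker_rho : RingHom.ker (rho p) = maximalIdeal ℤ_[p] := by
  apply le_antisymm
  · apply IsLocalRing.le_maximalIdeal
    rw [Ne, Ideal.eq_top_iff_one, RingHom.mem_ker]
    intro h
    rw [map_one] at h
    exact one_ne_zero h
  · rw [PadicInt.maximalIdeal_eq_span_p, Ideal.span_le, Set.singleton_subset_iff]
    rw [SetLike.mem_coe, RingHom.mem_ker]
    show IsLocalRing.residue (Lam11 p) (C (R := ℤ_[p]) ((p : ℕ) : ℤ_[p])) = 0
    apply Ideal.Quotient.eq_zero_iff_mem.mpr
    rw [Lam_mem_max_iff, PadicInt.maximalIdeal_eq_span_p]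
    simpa using Ideal.subset_span (Set.mem_singleton _)

lemma finite_residue : Finite (ResidueField (Lam11 p)) := by
  have e := RingHom.quotientKerEquivOfSurjective (rho_surjective p)
  have hfin : Finite (ℤ_[p] ⧸ RingHom.ker (rho p)) := by
    rw [ker_rho, ← PadicInt.ker_toZMod]
    exact Finite.of_injective _ (RingHom.kerLift_injective (PadicInt.toZMod : ℤ_[p] →+* ZMod p))
  exact Finite.of_equiv _ e.toEquiv

lemma finite_cot : Finite ((maximalIdeal (Lam11 p)).Cotangent) := by
  have := finite_residue p
  exact Finite.of_equiv _ (cotBasis p).equivFun.toEquiv.symm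

lemma not_cyclic :
    ¬ ∃ v : (maximalIdeal (Lam11 p)).Cotangent, Submodule.span (Lam11 p) {v} = ⊤ := by
  rintro ⟨v, hv⟩
  have hspan : Submodule.span (ResidueField (Lam11 p)) {v} = ⊤ := by
    rw [eq_top_iff]
    intro z _
    have hz : z ∈ Submodule.span (Lam11 p) {v} := by rw [hv]; trivial
    rw [Submodule.mem_span_singleton] at hz
    obtain ⟨c, rfl⟩ := hz
    exact Submodule.mem_span_singleton.mpr ⟨residue _ c, res_smul p c v⟩
  have hfd : Module.Finite (ResidueField (Lam11 p)) (CotangentSpace (Lam11 p)) :=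
    Module.Finite.of_basis (cotBasis p)
  have h1 : Module.finrank (ResidueField (Lam11 p)) (CotangentSpace (Lam11 p)) ≤ 1 := by
    rw [Module.finrank_le_one_iff_top_isPrincipal]
    exact ⟨⟨v, hspan.symm⟩⟩
  rw [finrank_cot] at h1
  omega

end Stmt11
/-- `T^dec = Λ[y,z]/(y(y−p), z(z−X), (y−p)z, y(z−X))` is isomorphic as a
`Λ`-algebra to the fiber product `Λ ×_{𝔽_p} Λ` via `y ↦ (p, 0)`, `z ↦ (X, 0)`.  Consequently
the kernel `J^dec` of the second projection is isomorphic as a `Λ`-module to the maximal ideal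
`m_Λ = (p, X)`, `J^dec/(J^dec)² ≅ m_Λ/m_Λ²` is a two-dimensional `𝔽_p`-vector space, which is
pseudo-null (finite) but not cyclic as a `Λ`-module. -/
theorem Tdec_iso_fiberProduct (p : ℕ) [Fact p.Prime] :
    (∃ e : Tdec p ≃ₐ[Lam11 p] ↥(fiberProd p),
      ((e (Ideal.Quotient.mk (Idec p) (MvPolynomial.X 0)) : ↥(fiberProd p)) :
          Lam11 p × Lam11 p) = ((p : Lam11 p), 0) ∧
      ((e (Ideal.Quotient.mk (Idec p) (MvPolynomial.X 1)) : ↥(fiberProd p)) :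
          Lam11 p × Lam11 p) = (PowerSeries.X, 0)) ∧
    Nonempty (↥((RingHom.ker (proj2 p)).restrictScalars (Lam11 p))
      ≃ₗ[Lam11 p] ↥(maximalIdeal (Lam11 p))) ∧
    Nonempty ((RingHom.ker (proj2 p)).Cotangent ≃+ (maximalIdeal (Lam11 p)).Cotangent) ∧
    Module.finrank (ResidueField (Lam11 p)) (CotangentSpace (Lam11 p)) = 2 ∧
    Finite ((maximalIdeal (Lam11 p)).Cotangent) ∧
    ¬ ∃ v : (maximalIdeal (Lam11 p)).Cotangent,
        Submodule.span (Lam11 p) {v} = ⊤ := by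
  refine ⟨⟨Stmt11.edec p, Stmt11.edec_X0 p, Stmt11.edec_X1 p⟩,
    ⟨Stmt11.kerEquiv p⟩, ⟨Stmt11.cotEquiv p⟩, Stmt11.finrank_cot p,
    Stmt11.finite_cot p, Stmt11.not_cyclic p⟩
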